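/- arXiv:1701.08210 — 3 statements merged into one kernel-verified Lean document; each statement's English description precedes it below -/
import Mathlib

section
/- Let X and Y be complex Banach spaces, let E ⊆ X and T ⊆ Y be open sets, and let φ : E × T → ℂ be a function such that: (i) there is a constant M with |φ(x, t)| ≤ M for all (x, t) ∈ E × T; (ii) for each t ∈ T, the function x ↦ φ(x, t) is holomorphic (complex Fréchet differentiable) on E; and (iii) for each x ∈ E, the function t ↦ φ(x, t) is holomorphic on T. Then the induced map Φ : T → C_b(E, ℂ), where Φ(t) is the bounded continuous function x ↦ φ(x, t) and C_b(E, ℂ) carries the supremum norm, is holomorphic on T. -/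
open Metric Set Filter Asymptotics Topology

/-- Second-order Cauchy/Schwarz estimate for a bounded holomorphic function on a disk. -/
lemma earle_key {f : ℂ → ℂ} {R M : ℝ} (hR : 0 < R) (hM : 0 ≤ M)
    (hd : DifferentiableOn ℂ f (ball 0 R))
    (hbd : ∀ z ∈ ball (0:ℂ) R, ‖f z‖ ≤ M)
    {z : ℂ} (hz : z ∈ ball (0:ℂ) R) :
    ‖f z - f 0 - z * deriv f 0‖ ≤ (4*M+3)/R^2 * ‖z‖^2 := by
  have h0 : (0:ℂ) ∈ ball (0:ℂ) R := mem_ball_self hR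
  set g : ℂ → ℂ := dslope f 0 with hg
  have m1 : MapsTo f (ball 0 R) (ball (f 0) (2*M+1)) := by
    intro w hw
    rw [mem_ball, dist_eq_norm]
    calc ‖f w - f 0‖ ≤ ‖f w‖ + ‖f 0‖ := norm_sub_le _ _
      _ ≤ M + M := add_le_add (hbd w hw) (hbd 0 h0)
      _ < 2*M+1 := by linarith
  have hgb : ∀ w ∈ ball (0:ℂ) R, ‖g w‖ ≤ (2*M+1)/R := fun w hw =>
    Complex.norm_dslope_le_div_of_mapsTo_ball hd (m1.mono_right ball_subset_closedBall) hw
  have hgd : DifferentiableOn ℂ g (ball 0 R) :=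
    (Complex.differentiableOn_dslope (ball_mem_nhds _ hR)).mpr hd
  have m2 : MapsTo g (ball 0 R) (ball (g 0) ((4*M+3)/R)) := by
    intro w hw
    rw [mem_ball, dist_eq_norm]
    calc ‖g w - g 0‖ ≤ ‖g w‖ + ‖g 0‖ := norm_sub_le _ _
      _ ≤ (2*M+1)/R + (2*M+1)/R := add_le_add (hgb w hw) (hgb 0 h0)
      _ < (4*M+3)/R := by
          rw [← add_div]
          exact (div_lt_div_iff_of_pos_right hR).mpr (by linarith)
  have hsl : ‖dslope g 0 z‖ ≤ (4*M+3)/R/R :=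
    Complex.norm_dslope_le_div_of_mapsTo_ball hgd (m2.mono_right ball_subset_closedBall) hz
  rcases eq_or_ne z 0 with rfl | hz0
  · simp
  · have egz : g z = (f z - f 0) / z := by
      rw [hg, dslope_of_ne _ hz0, slope_def_field, sub_zero]
    have eg0 : g 0 = deriv f 0 := dslope_same f 0
    have eds : dslope g 0 z = (g z - g 0) / z := by
      rw [dslope_of_ne _ hz0, slope_def_field, sub_zero]
    have e1 : f z - f 0 - z * deriv f 0 = z^2 * dslope g 0 z := by
      rw [eds, egz, eg0]
      field_simp
    calc ‖f z - f 0 - z * deriv f 0‖ = ‖z‖^2 * ‖dslope g 0 z‖ := by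
          rw [e1, norm_mul, norm_pow]
      _ ≤ ‖z‖^2 * ((4*M+3)/R/R) := by
          exact mul_le_mul_of_nonneg_left hsl (by positivity)
      _ = (4*M+3)/R^2 * ‖z‖^2 := by
          rw [div_div, ← sq]
          ring

/-- Second-order estimate for a bounded holomorphic function on a ball in a Banach space. -/
lemma earle_aux {Y : Type*} [NormedAddCommGroup Y] [NormedSpace ℂ Y]
    {g : Y → ℂ} {t₀ : Y} {r M : ℝ} (hr : 0 < r) (hM : 0 ≤ M)
    (hd : DifferentiableOn ℂ g (ball t₀ r))
    (hbd : ∀ s ∈ ball t₀ r, ‖g s‖ ≤ M)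
    {g' : Y →L[ℂ] ℂ} (hg' : HasFDerivAt g g' t₀)
    {h : Y} (hh : ‖h‖ < r) :
    ‖g (t₀ + h) - g t₀ - g' h‖ ≤ (4*M+3)/r^2 * ‖h‖^2 := by
  rcases eq_or_ne h 0 with rfl | hne
  · simp
  have hpos : 0 < ‖h‖ := norm_pos_iff.mpr hne
  set R : ℝ := r / ‖h‖ with hRdef
  have hR : 0 < R := div_pos hr hpos
  set f : ℂ → ℂ := fun z => g (t₀ + z • h) with hf
  have hmap : ∀ z ∈ ball (0:ℂ) R, t₀ + z • h ∈ ball t₀ r := by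
    intro z hz
    rw [mem_ball, dist_eq_norm] at hz ⊢
    rw [add_sub_cancel_left, norm_smul]
    rw [sub_zero] at hz
    calc ‖z‖ * ‖h‖ < R * ‖h‖ := by exact mul_lt_mul_of_pos_right hz hpos
      _ = r := div_mul_cancel₀ r hpos.ne'
  have hline : Differentiable ℂ (fun z : ℂ => t₀ + z • h) :=
    (differentiable_id.smul_const h).const_add t₀
  have hfd : DifferentiableOn ℂ f (ball 0 R) :=
    hd.comp hline.differentiableOn hmap
  have hfbd : ∀ z ∈ ball (0:ℂ) R, ‖f z‖ ≤ M := fun z hz => hbd _ (hmap z hz)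
  have hlder : HasDerivAt (fun z : ℂ => t₀ + z • h) h 0 := by
    simpa using ((hasDerivAt_id (0:ℂ)).smul_const h).const_add t₀
  have hfder : HasDerivAt f (g' h) 0 := by
    have h1 : HasFDerivAt g g' (t₀ + (0:ℂ) • h) := by simpa using hg'
    exact h1.comp_hasDerivAt 0 hlder
  have h1R : (1:ℂ) ∈ ball (0:ℂ) R := by
    rw [mem_ball, dist_eq_norm, sub_zero, norm_one]
    exact (one_lt_div hpos).mpr hh
  have key := earle_key hR hM hfd hfbd h1R
  have ef1 : f 1 = g (t₀ + h) := by simp [hf]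
  have ef0 : f 0 = g t₀ := by simp [hf]
  have edf : deriv f 0 = g' h := hfder.deriv
  rw [ef1, ef0, edf, norm_one, one_mul, one_pow, mul_one] at key
  calc ‖g (t₀ + h) - g t₀ - g' h‖ ≤ (4*M+3)/R^2 := key
    _ = (4*M+3)/r^2 * ‖h‖^2 := by
        rw [hRdef, div_pow, div_div_eq_mul_div]
        ring
  
/-- First-order (Cauchy) estimate: derivative bound for a bounded holomorphic function. -/
lemma earle_aux_deriv {Y : Type*} [NormedAddCommGroup Y] [NormedSpace ℂ Y]
    {g : Y → ℂ} {t₀ : Y} {r M : ℝ} (hr : 0 < r) (hM : 0 ≤ M)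
    (hd : DifferentiableOn ℂ g (ball t₀ r))
    (hbd : ∀ s ∈ ball t₀ r, ‖g s‖ ≤ M)
    {g' : Y →L[ℂ] ℂ} (hg' : HasFDerivAt g g' t₀) (h : Y) :
    ‖g' h‖ ≤ (2*M+1)/r * ‖h‖ := by
  rcases eq_or_ne h 0 with rfl | hne
  · simp only [map_zero, norm_zero, norm_zero, mul_zero]
    positivity
  have hpos : 0 < ‖h‖ := norm_pos_iff.mpr hne
  set R : ℝ := r / ‖h‖ with hRdef
  have hR : 0 < R := div_pos hr hpos
  set f : ℂ → ℂ := fun z => g (t₀ + z • h) with hf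
  have hmap : ∀ z ∈ ball (0:ℂ) R, t₀ + z • h ∈ ball t₀ r := by
    intro z hz
    rw [mem_ball, dist_eq_norm] at hz ⊢
    rw [add_sub_cancel_left, norm_smul]
    rw [sub_zero] at hz
    calc ‖z‖ * ‖h‖ < R * ‖h‖ := by exact mul_lt_mul_of_pos_right hz hpos
      _ = r := div_mul_cancel₀ r hpos.ne'
  have hline : Differentiable ℂ (fun z : ℂ => t₀ + z • h) :=
    (differentiable_id.smul_const h).const_add t₀
  have hfd : DifferentiableOn ℂ f (ball 0 R) :=
    hd.comp hline.differentiableOn hmap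
  have h0 : (0:ℂ) ∈ ball (0:ℂ) R := mem_ball_self hR
  have m1 : MapsTo f (ball 0 R) (ball (f 0) (2*M+1)) := by
    intro w hw
    rw [mem_ball, dist_eq_norm]
    calc ‖f w - f 0‖ ≤ ‖f w‖ + ‖f 0‖ := norm_sub_le _ _
      _ ≤ M + M := add_le_add (hbd _ (hmap w hw)) (hbd _ (hmap 0 h0))
      _ < 2*M+1 := by linarith
  have hlder : HasDerivAt (fun z : ℂ => t₀ + z • h) h 0 := by
    simpa using ((hasDerivAt_id (0:ℂ)).smul_const h).const_add t₀
  have hfder : HasDerivAt f (g' h) 0 := by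
    have h1 : HasFDerivAt g g' (t₀ + (0:ℂ) • h) := by simpa using hg'
    exact h1.comp_hasDerivAt 0 hlder
  have key := Complex.norm_deriv_le_div_of_mapsTo_ball hfd (m1.mono_right ball_subset_closedBall) hR
  rw [hfder.deriv] at key
  calc ‖g' h‖ ≤ (2*M+1)/R := key
    _ = (2*M+1)/r * ‖h‖ := by
        rw [hRdef, div_div_eq_mul_div]
        ring

/-- Earle's lemma: let `E ⊆ X`, `T ⊆ Y` be open subsets of complex Banach spaces and let
`φ : E × T → ℂ` be bounded, holomorphic in `x ∈ E` for each fixed `t ∈ T`, and holomorphic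
in `t ∈ T` for each fixed `x ∈ E`.  Then the induced map `Φ : T → C_b(E, ℂ)`,
`Φ t = φ (·, t)`, into the Banach space of bounded continuous functions on `E` with the
sup norm, is holomorphic on `T`. -/
theorem earle_lemma_holomorphic_into_sup_norm_space
    {X Y : Type*} [NormedAddCommGroup X] [NormedSpace ℂ X] [CompleteSpace X]
    [NormedAddCommGroup Y] [NormedSpace ℂ Y] [CompleteSpace Y]
    (E : Set X) (T : Set Y) (hE : IsOpen E) (hT : IsOpen T)
    (φ : X → Y → ℂ) (M : ℝ)
    (hbd : ∀ x ∈ E, ∀ t ∈ T, ‖φ x t‖ ≤ M)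
    (hholx : ∀ t ∈ T, DifferentiableOn ℂ (fun x => φ x t) E)
    (hholt : ∀ x ∈ E, DifferentiableOn ℂ (fun t => φ x t) T)
    (Φ : Y → BoundedContinuousFunction E ℂ)
    (hΦ : ∀ t ∈ T, ∀ x : E, Φ t x = φ x t) :
    DifferentiableOn ℂ Φ T := by
  rcases E.eq_empty_or_nonempty with rfl | ⟨x₀, hx₀⟩
  · have hzero : Φ = fun _ => 0 := funext fun s => by
      ext x
      exact absurd x.2 (Set.notMem_empty _)
    rw [hzero]
    exact differentiableOn_const 0
  intro t ht
  apply DifferentiableAt.differentiableWithinAt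
  have hM : 0 ≤ M := le_trans (norm_nonneg _) (hbd x₀ hx₀ t ht)
  obtain ⟨r, hr, hball⟩ := Metric.isOpen_iff.mp hT t ht
  set D : X → Y →L[ℂ] ℂ := fun x => fderiv ℂ (fun s => φ x s) t with hDdef
  have hDf : ∀ x ∈ E, HasFDerivAt (fun s => φ x s) (D x) t := fun x hx =>
    ((hholt x hx).differentiableAt (hT.mem_nhds ht)).hasFDerivAt
  have hdball : ∀ x ∈ E, DifferentiableOn ℂ (fun s => φ x s) (ball t r) :=
    fun x hx => (hholt x hx).mono hball
  have hbdball : ∀ x ∈ E, ∀ s ∈ ball t r, ‖φ x s‖ ≤ M := fun x hx s hs => by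
    exact hbd x hx s (hball hs)
  have est : ∀ x ∈ E, ∀ h : Y, ‖h‖ < r →
      ‖φ x (t + h) - φ x t - D x h‖ ≤ (4*M+3)/r^2 * ‖h‖^2 :=
    fun x hx h hh => earle_aux hr hM (hdball x hx) (hbdball x hx) (hDf x hx) hh
  have estd : ∀ x ∈ E, ∀ h : Y, ‖D x h‖ ≤ (2*M+1)/r * ‖h‖ :=
    fun x hx h => earle_aux_deriv hr hM (hdball x hx) (hbdball x hx) (hDf x hx) h
  -- continuity of x ↦ D x v on E, via uniform convergence of difference quotients
  have hcont : ∀ v : Y, ContinuousOn (fun x => D x v) E := by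
    intro v
    have h2 : ∀ᶠ (n : ℕ) in atTop, ‖v‖ / r < (n : ℝ) :=
      tendsto_natCast_atTop_atTop.eventually_gt_atTop _
    have hsmall : ∀ (n : ℕ), ‖v‖ / r < (n : ℝ) → 0 < n →
        ‖((n : ℂ))⁻¹ • v‖ < r := by
      intro n hn1 hn0
      have hnR : (0:ℝ) < (n : ℝ) := Nat.cast_pos.mpr hn0
      rw [norm_smul, norm_inv, Complex.norm_natCast]
      rw [inv_mul_eq_div, div_lt_iff₀ hnR]
      have := (div_lt_iff₀ hr).mp hn1
      nlinarith
    refine TendstoUniformlyOn.continuousOn (p := (atTop : Filter ℕ))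
      (F := fun (n : ℕ) (x : X) => (n : ℂ) * (φ x (t + ((n : ℂ))⁻¹ • v) - φ x t)) ?_ ?_
    · rw [Metric.tendstoUniformlyOn_iff]
      intro ε hε
      have hlt : ∀ᶠ (n : ℕ) in atTop, (4*M+3)/r^2 * ‖v‖^2 / (n : ℝ) < ε :=
        (tendsto_const_div_atTop_nhds_zero_nat ((4*M+3)/r^2 * ‖v‖^2)).eventually_lt_const hε
      filter_upwards [h2, hlt, eventually_gt_atTop 0] with n hn1 hn2 hn0
      intro x hx
      have hnR : (0:ℝ) < (n : ℝ) := Nat.cast_pos.mpr hn0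
      have hnc : (n : ℂ) ≠ 0 := Nat.cast_ne_zero.mpr hn0.ne'
      set hv : Y := ((n : ℂ))⁻¹ • v with hhvdef
      have hnorm : ‖hv‖ = ‖v‖ / (n : ℝ) := by
        rw [hhvdef, norm_smul, norm_inv, Complex.norm_natCast, inv_mul_eq_div]
      have hhv : ‖hv‖ < r := hsmall n hn1 hn0
      have hk := est x hx hv hhv
      rw [dist_eq_norm]
      have hDs : D x hv = (n : ℂ)⁻¹ * D x v := by
        rw [hhvdef, (D x).map_smul, smul_eq_mul]
      have heq : D x v - (n : ℂ) * (φ x (t + hv) - φ x t)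
          = -((n : ℂ) * (φ x (t + hv) - φ x t - D x hv)) := by
        rw [hDs]; field_simp; ring
      rw [heq, norm_neg, norm_mul, Complex.norm_natCast]
      calc (n : ℝ) * ‖φ x (t + hv) - φ x t - D x hv‖
          ≤ (n : ℝ) * ((4*M+3)/r^2 * (‖v‖ / (n : ℝ))^2) := by
            rw [← hnorm]; exact mul_le_mul_of_nonneg_left hk hnR.le
        _ = (4*M+3)/r^2 * ‖v‖^2 / (n : ℝ) := by field_simp
        _ < ε := hn2
    · refine Filter.Eventually.frequently ?_
      filter_upwards [h2, eventually_gt_atTop 0] with n hn1 hn0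
      have hmem : t + ((n : ℂ))⁻¹ • v ∈ T := by
        apply hball
        rw [mem_ball, dist_eq_norm, add_sub_cancel_left]
        exact hsmall n hn1 hn0
      exact continuousOn_const.mul
        (((hholx _ hmem).continuousOn).sub ((hholx t ht).continuousOn))
  -- assemble the candidate derivative as a continuous linear map into C_b(E, ℂ)
  have hDb : ∀ v : Y, ∀ x : E, ‖D (↑x) v‖ ≤ (2*M+1)/r * ‖v‖ := fun v x => estd _ x.2 v
  set Lb : Y → BoundedContinuousFunction E ℂ := fun v =>
    BoundedContinuousFunction.ofNormedAddCommGroup (fun x : E => D (↑x) v)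
      ((hcont v).restrict) ((2*M+1)/r * ‖v‖) (hDb v) with hLbdef
  set L : Y →L[ℂ] BoundedContinuousFunction E ℂ := LinearMap.mkContinuous
    { toFun := Lb
      map_add' := fun v w => by
        ext x
        simp [hLbdef]
        rfl
      map_smul' := fun c v => by
        ext x
        simp [hLbdef]
        exact Or.inl rfl }
    ((2*M+1)/r)
    (fun v => by
      show ‖Lb v‖ ≤ (2*M+1)/r * ‖v‖
      rw [hLbdef]
      exact BoundedContinuousFunction.norm_ofNormedAddCommGroup_le
        ((hcont v).restrict) (by positivity) (hDb v)) with hLdef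
  have hLx : ∀ (h : Y) (x : E), (L h) x = D (↑x) h := fun h x => rfl
  have hL : HasFDerivAt Φ L t := by
    rw [hasFDerivAt_iff_isLittleO_nhds_zero]
    have big : (fun h : Y => Φ (t + h) - Φ t - L h) =O[𝓝 0] (fun h : Y => ‖h‖ * ‖h‖) := by
      rw [Asymptotics.isBigO_iff]
      refine ⟨(4*M+3)/r^2, ?_⟩
      filter_upwards [Metric.ball_mem_nhds (0:Y) hr] with h hh
      rw [mem_ball, dist_eq_norm, sub_zero] at hh
      have htT' : t + h ∈ T := hball (by rw [mem_ball, dist_eq_norm, add_sub_cancel_left]; exact hh)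
      have hnn : (0:ℝ) ≤ ‖h‖ * ‖h‖ := mul_self_nonneg _
      rw [Real.norm_of_nonneg hnn]
      refine (BoundedContinuousFunction.norm_le (by positivity)).mpr ?_
      intro x
      have hx := est ↑x x.2 h hh
      simp only [BoundedContinuousFunction.coe_sub, Pi.sub_apply]
      rw [hΦ (t + h) htT' x, hΦ t ht x, hLx h x]
      calc ‖φ (↑x) (t + h) - φ (↑x) t - D (↑x) h‖ ≤ (4*M+3)/r^2 * ‖h‖^2 := hx
        _ = (4*M+3)/r^2 * (‖h‖ * ‖h‖) := by ring
    have small : (fun h : Y => ‖h‖ * ‖h‖) =o[𝓝 0] (fun h : Y => h) := by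
      rw [Asymptotics.isLittleO_iff]
      intro c hc
      filter_upwards [Metric.closedBall_mem_nhds (0:Y) hc] with h hh
      rw [Metric.mem_closedBall, dist_eq_norm, sub_zero] at hh
      rw [Real.norm_of_nonneg (mul_self_nonneg _)]
      exact mul_le_mul_of_nonneg_right hh (norm_nonneg h)
    exact big.trans_isLittleO small
  exact hL.differentiableAt
end

section
/- Let Y be a complex Banach space, T ⊆ Y an open set, E a set, and φ : E × T → ℂ a function such that |φ(x, t)| ≤ M for all (x, t) ∈ E × T and, for each x ∈ E, the function t ↦ φ(x, t) is holomorphic on T. Let t ∈ T and v ∈ Y be such that t + ξ·v ∈ T for every ξ ∈ ℂ with |ξ| ≤ 1. Then there exists a function D : E → ℂ (the directional derivative of φ(x, ·) at t in direction v, given by D(x) = (1/(2πi)) ∮_{|ξ|=1} φ(x, t + ξ v) ξ^{-2} dξ) such that for every c ∈ ℂ with |c| ≤ 1/2, sup_{x ∈ E} |φ(x, t + c·v) − φ(x, t) − c·D(x)| ≤ 2M|c|². -/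
open scoped Real
open Metric

set_option maxHeartbeats 1000000

/-- Let `T` be an open subset of a complex Banach space `Y`, `E` a set, and
`φ : E × T → ℂ` bounded by `M` and holomorphic in `t ∈ T` for each fixed `x ∈ E`.
If `t ∈ T` and `v ∈ Y` are such that `t + ξ • v ∈ T` for all `|ξ| ≤ 1`, then the
directional derivative `D x = (2πi)⁻¹ ∮_{|ξ|=1} φ x (t + ξ v) ξ⁻² dξ` exists and
satisfies the uniform estimate
`sup_x |φ x (t + c v) − φ x t − c • D x| ≤ 2 M |c|²` for all `|c| ≤ 1/2`. -/
theorem directional_derivative_uniform_estimate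
    {Y : Type*} [NormedAddCommGroup Y] [NormedSpace ℂ Y]
    {E : Type*} (T : Set Y) (hT : IsOpen T)
    (φ : E → Y → ℂ) (M : ℝ)
    (hbd : ∀ x, ∀ t ∈ T, ‖φ x t‖ ≤ M)
    (hhol : ∀ x, DifferentiableOn ℂ (φ x) T)
    (t : Y) (ht : t ∈ T) (v : Y)
    (hv : ∀ ξ : ℂ, ‖ξ‖ ≤ 1 → t + ξ • v ∈ T) :
    ∃ D : E → ℂ,
      (∀ x, D x = (2 * (Real.pi : ℂ) * Complex.I)⁻¹ *
        ∮ ξ in C(0, 1), φ x (t + ξ • v) / ξ ^ 2) ∧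
      ∀ c : ℂ, ‖c‖ ≤ 1 / 2 → ∀ x,
        ‖φ x (t + c • v) - φ x t - c * D x‖ ≤ 2 * M * ‖c‖ ^ 2 := by
  refine ⟨fun x => (2 * (Real.pi : ℂ) * Complex.I)⁻¹ *
      ∮ ξ in C(0, 1), φ x (t + ξ • v) / ξ ^ 2, fun x => rfl, ?_⟩
  intro c hc x
  obtain ⟨f, hfdef⟩ : ∃ f : ℂ → ℂ, f = fun ξ => φ x (t + ξ • v) := ⟨_, rfl⟩
  have hM : 0 ≤ M := le_trans (norm_nonneg _) (hbd x t ht)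
  have hdiff : ∀ ξ ∈ closedBall (0 : ℂ) 1, DifferentiableAt ℂ f ξ := by
    intro ξ hξ
    subst hfdef
    have hξ' : ‖ξ‖ ≤ 1 := by
      exact mem_closedBall_zero_iff.mp hξ
    have hmem : t + ξ • v ∈ T := hv ξ hξ'
    have h1 : DifferentiableAt ℂ (φ x) (t + ξ • v) :=
      (hhol x).differentiableAt (hT.mem_nhds hmem)
    have h2 : DifferentiableAt ℂ (fun ξ : ℂ => t + ξ • v) ξ := by fun_prop
    exact DifferentiableAt.comp ξ h1 h2
  have hcont : ContinuousOn f (sphere (0 : ℂ) 1) := fun z hz =>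
    ((hdiff z (sphere_subset_closedBall hz)).continuousAt).continuousWithinAt
  have hz0 : ∀ z ∈ sphere (0 : ℂ) 1, z ≠ 0 := by
    intro z hz
    have := mem_sphere_zero_iff_norm.mp hz
    intro h; rw [h] at this; simp at this
  have hzc : ∀ z ∈ sphere (0 : ℂ) 1, z - c ≠ 0 := by
    intro z hz
    have h1 : ‖z‖ = 1 := mem_sphere_zero_iff_norm.mp hz
    have h2 : ‖c‖ ≤ 1 / 2 := hc
    intro h
    have hzeq : z = c := sub_eq_zero.mp h
    rw [← hzeq, h1] at h2
    linarith
  have hzc' : ∀ z ∈ sphere (0 : ℂ) 1, (1 : ℝ) / 2 ≤ ‖z - c‖ := by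
    intro z hz
    have h1 : ‖z‖ = 1 := mem_sphere_zero_iff_norm.mp hz
    have h2 : ‖c‖ ≤ 1 / 2 := hc
    have := norm_sub_norm_le z c
    linarith
  -- circle integrability
  have hcont1 : ContinuousOn (fun z => (z - c)⁻¹ • f z) (sphere (0 : ℂ) 1) :=
    ((continuousOn_id.sub continuousOn_const).inv₀ hzc).smul hcont
  have hcont2 : ContinuousOn (fun z => (z - 0)⁻¹ • f z) (sphere (0 : ℂ) 1) :=
    ((continuousOn_id.sub continuousOn_const).inv₀ (by simpa using hz0)).smul hcont
  have hcont3 : ContinuousOn (fun z => c • (f z / z ^ 2)) (sphere (0 : ℂ) 1) :=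
    ContinuousOn.const_smul (hcont.div (continuousOn_pow 2)
      (fun z hz => pow_ne_zero 2 (hz0 z hz))) c
  have hint1 : CircleIntegrable (fun z => (z - c)⁻¹ • f z) 0 1 :=
    ContinuousOn.circleIntegrable (by norm_num) hcont1
  have hint2 : CircleIntegrable (fun z => (z - 0)⁻¹ • f z) 0 1 :=
    ContinuousOn.circleIntegrable (by norm_num) hcont2
  have hint3 : CircleIntegrable (fun z => c • (f z / z ^ 2)) 0 1 :=
    ContinuousOn.circleIntegrable (by norm_num) hcont3
  have hint12 : CircleIntegrable (fun z => (z - c)⁻¹ • f z - (z - 0)⁻¹ • f z) 0 1 :=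
    ContinuousOn.circleIntegrable (by norm_num) (hcont1.sub hcont2)
  -- Cauchy integral formula
  have hD : DiffContOnCl ℂ f (ball (0 : ℂ) 1) := by
    apply DifferentiableOn.diffContOnCl
    rw [closure_ball (0 : ℂ) one_ne_zero]
    exact fun z hz => (hdiff z hz).differentiableWithinAt
  have hcf : ∀ w ∈ ball (0 : ℂ) 1,
      f w = (2 * (Real.pi : ℂ) * Complex.I)⁻¹ * ∮ z in C(0, 1), (z - w)⁻¹ • f z := by
    intro w hw
    have := hD.two_pi_i_inv_smul_circleIntegral_sub_inv_smul hw
    rw [smul_eq_mul] at this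
    exact this.symm
  have hc1 : c ∈ ball (0 : ℂ) 1 := by
    rw [mem_ball_zero_iff]
    calc ‖c‖ ≤ 1 / 2 := hc
    _ < 1 := by norm_num
  have h0m : (0 : ℂ) ∈ ball (0 : ℂ) 1 := by simp
  set K : ℂ := (2 * (Real.pi : ℂ) * Complex.I)⁻¹ with hK
  have ec : φ x (t + c • v) = f c := by rw [hfdef]
  have e0 : φ x t = f 0 := by rw [hfdef]; simp
  have hsplit : (∮ z in C(0, 1),
          ((z - c)⁻¹ • f z - (z - 0)⁻¹ • f z - c • (f z / z ^ 2)))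
      = (∮ z in C(0, 1), (z - c)⁻¹ • f z) - (∮ z in C(0, 1), (z - 0)⁻¹ • f z)
        - c • ∮ z in C(0, 1), f z / z ^ 2 := by
    rw [circleIntegral.integral_sub hint12 hint3,
      circleIntegral.integral_sub hint1 hint2, circleIntegral.integral_smul]
  have key : φ x (t + c • v) - φ x t - c * (K * ∮ z in C(0, 1), f z / z ^ 2)
      = K * ∮ z in C(0, 1),
          ((z - c)⁻¹ • f z - (z - 0)⁻¹ • f z - c • (f z / z ^ 2)) := by
    rw [hsplit, ec, e0, hcf c hc1, hcf 0 h0m, smul_eq_mul]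
    ring
  have eqOn : Set.EqOn
      (fun z => (z - c)⁻¹ • f z - (z - 0)⁻¹ • f z - c • (f z / z ^ 2))
      (fun z => f z * (c ^ 2 / (z ^ 2 * (z - c)))) (sphere (0 : ℂ) 1) := by
    intro z hz
    have h1 := hz0 z hz
    have h2 := hzc z hz
    simp only [smul_eq_mul, sub_zero]
    field_simp
    ring
  rw [show (fun x' => K * ∮ (ξ : ℂ) in C(0, 1), φ x' (t + ξ • v) / ξ ^ 2) x
      = K * ∮ (z : ℂ) in C(0, 1), f z / z ^ 2 from by subst hfdef; rfl]
  rw [key, circleIntegral.integral_congr (by norm_num) eqOn]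
  have hKabs : ‖K‖ = (2 * Real.pi)⁻¹ := by
    rw [hK, norm_inv]
    simp [Real.pi_nonneg, abs_of_nonneg, mul_comm]
  have hnorm : ‖∮ z in C(0, 1), f z * (c ^ 2 / (z ^ 2 * (z - c)))‖
      ≤ 2 * Real.pi * 1 * (2 * M * ‖c‖ ^ 2) := by
    apply circleIntegral.norm_integral_le_of_norm_le_const (by norm_num)
    intro z hz
    have h1 : ‖z‖ = 1 := mem_sphere_zero_iff_norm.mp hz
    have hfz : ‖f z‖ ≤ M := by rw [hfdef]; exact hbd x _ (hv z (le_of_eq h1))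
    have h2 := hzc' z hz
    rw [norm_mul, norm_div, norm_mul, norm_pow, norm_pow, h1]
    have hzcpos : (0 : ℝ) < ‖z - c‖ := lt_of_lt_of_le (by norm_num) h2
    have hd : ‖c‖ ^ 2 / (1 ^ 2 * ‖z - c‖) ≤ 2 * ‖c‖ ^ 2 := by
      rw [one_pow, one_mul, div_le_iff₀ hzcpos]
      nlinarith [sq_nonneg (‖c‖)]
    calc ‖f z‖ * (‖c‖ ^ 2 / (1 ^ 2 * ‖z - c‖)) ≤ M * (2 * ‖c‖ ^ 2) := by
          apply mul_le_mul hfz hd (by positivity) hM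
      _ = 2 * M * ‖c‖ ^ 2 := by ring
  calc ‖K * ∮ z in C(0, 1), f z * (c ^ 2 / (z ^ 2 * (z - c)))‖
      = ‖K‖ * ‖∮ z in C(0, 1), f z * (c ^ 2 / (z ^ 2 * (z - c)))‖ := by
        rw [norm_mul]
    _ ≤ (2 * Real.pi)⁻¹ * (2 * Real.pi * 1 * (2 * M * ‖c‖ ^ 2)) := by
        rw [hKabs]
        apply mul_le_mul_of_nonneg_left hnorm (by positivity)
    _ = 2 * M * ‖c‖ ^ 2 := by
        field_simp
end

section
/- Let X, Y, Z be complex Banach spaces, let U ⊆ X and V ⊆ Y be open sets, and let f : U × V → Z be a function that is bounded in norm on U × V and separately holomorphic: for each y ∈ V the map x ↦ f(x, y) is holomorphic on U, and for each x ∈ U the map y ↦ f(x, y) is holomorphic on V. Then f is jointly holomorphic on U × V, i.e., f is complex Fréchet differentiable at every point of the open set U × V of the product Banach space X × Y. -/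
open Metric Set Asymptotics Filter

/-- Schwarz-type estimate: a norm-bounded holomorphic map on a disc moves points
at most linearly away from the center value. -/
lemma schwarz_of_bound_cplx {Z : Type*} [NormedAddCommGroup Z] [NormedSpace ℂ Z]
    {h : ℂ → Z} {R C : ℝ} (hR : 0 < R)
    (hd : DifferentiableOn ℂ h (ball 0 R))
    (hb : ∀ t ∈ ball (0 : ℂ) R, ‖h t‖ ≤ C) {z : ℂ} (hz : z ∈ ball (0 : ℂ) R) :
    ‖h z - h 0‖ ≤ 2 * C / R * ‖z‖ := by
  have h0 : (0 : ℂ) ∈ ball (0 : ℂ) R := by simpa using hR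
  have key : ∀ ε > (0:ℝ), ‖h z - h 0‖ ≤ (2 * C + ε) / R * ‖z‖ := by
    intro ε hε
    have hmaps : MapsTo h (ball 0 R) (ball (h 0) (2 * C + ε)) := by
      intro t ht
      have h1 := hb t ht
      have h2 := hb 0 h0
      have hle : dist (h t) (h 0) ≤ 2 * C := by
        calc dist (h t) (h 0) = ‖h t - h 0‖ := by rw [dist_eq_norm]
        _ ≤ ‖h t‖ + ‖h 0‖ := norm_sub_le _ _
        _ ≤ 2 * C := by linarith
      exact mem_ball.2 (lt_of_le_of_lt hle (by linarith))
    have := Complex.dist_le_div_mul_dist_of_mapsTo_ball hd (hmaps.mono_right ball_subset_closedBall) hz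
    simpa [dist_eq_norm] using this
  have hlim : Filter.Tendsto (fun ε : ℝ => (2 * C + ε) / R * ‖z‖) (nhdsWithin 0 (Set.Ioi 0))
      (nhds (2 * C / R * ‖z‖)) := by
    have hc : ContinuousAt (fun ε : ℝ => (2 * C + ε) / R * ‖z‖) 0 := by fun_prop
    have := hc.tendsto.mono_left (nhdsWithin_le_nhds (s := Set.Ioi (0:ℝ)))
    simpa using this
  exact ge_of_tendsto hlim (eventually_nhdsWithin_of_forall (fun ε hε => key ε hε))
/-- Banach-space version of the above, via a one-dimensional slice. -/
lemma schwarz_of_bound {E Z : Type*} [NormedAddCommGroup E] [NormedSpace ℂ E]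
    [NormedAddCommGroup Z] [NormedSpace ℂ Z]
    {h : E → Z} {a : E} {R C : ℝ} (hR : 0 < R)
    (hd : DifferentiableOn ℂ h (ball a R))
    (hb : ∀ w ∈ ball a R, ‖h w‖ ≤ C) {w : E} (hw : w ∈ ball a R) :
    ‖h w - h a‖ ≤ 2 * C / R * ‖w - a‖ := by
  rcases eq_or_ne w a with rfl | hne
  · simp
  · have hwa : (0:ℝ) < ‖w - a‖ := by
      rw [norm_pos_iff, sub_ne_zero]; exact hne
    set u : E := ((‖w - a‖ : ℂ))⁻¹ • (w - a) with hu
    have hcne : ((‖w - a‖ : ℝ) : ℂ) ≠ 0 := by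
      exact_mod_cast ne_of_gt hwa
    have hnu : ‖u‖ = 1 := by
      rw [hu, norm_smul, norm_inv, Complex.norm_real, Real.norm_eq_abs,
        abs_of_pos hwa, inv_mul_cancel₀ (ne_of_gt hwa)]
    set φ : ℂ → Z := fun t => h (a + t • u) with hφ
    have hmaps : MapsTo (fun t : ℂ => a + t • u) (ball 0 R) (ball a R) := by
      intro t ht
      simp only [mem_ball, dist_eq_norm] at ht ⊢
      rw [add_sub_cancel_left, norm_smul, hnu, mul_one]
      simpa using ht
    have hdφ : DifferentiableOn ℂ φ (ball 0 R) := by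
      apply hd.comp _ hmaps
      exact ((differentiable_id.smul_const u).const_add a).differentiableOn
    have hbφ : ∀ t ∈ ball (0:ℂ) R, ‖φ t‖ ≤ C := fun t ht => hb _ (hmaps ht)
    have hzmem : ((‖w - a‖ : ℝ) : ℂ) ∈ ball (0:ℂ) R := by
      simp only [mem_ball, dist_eq_norm, sub_zero, Complex.norm_real,
        Real.norm_eq_abs, abs_of_pos hwa]
      simpa [dist_eq_norm] using hw
    have heval : a + ((‖w - a‖ : ℝ) : ℂ) • u = w := by
      rw [hu, smul_smul, mul_inv_cancel₀ hcne, one_smul, add_sub_cancel]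
    have := schwarz_of_bound_cplx hR hdφ hbφ hzmem
    simp only [hφ, heval, zero_smul, add_zero] at this
    calc ‖h w - h a‖ ≤ 2 * C / R * ‖((‖w - a‖ : ℝ) : ℂ)‖ := this
    _ = 2 * C / R * ‖w - a‖ := by
        rw [Complex.norm_real, Real.norm_eq_abs, abs_of_pos hwa]

set_option maxHeartbeats 1000000 in
/-- Hartogs' theorem for complex Banach spaces: a bounded, separately holomorphic map
`f : U × V → Z` on a product of open subsets of complex Banach spaces is jointly
holomorphic on `U ×ˢ V`. -/
theorem hartogs_banach_bounded_separately_holomorphic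
    {X Y Z : Type*} [NormedAddCommGroup X] [NormedSpace ℂ X] [CompleteSpace X]
    [NormedAddCommGroup Y] [NormedSpace ℂ Y] [CompleteSpace Y]
    [NormedAddCommGroup Z] [NormedSpace ℂ Z] [CompleteSpace Z]
    (U : Set X) (V : Set Y) (hU : IsOpen U) (hV : IsOpen V)
    (f : X × Y → Z) (M : ℝ)
    (hbd : ∀ p ∈ U ×ˢ V, ‖f p‖ ≤ M)
    (h1 : ∀ y ∈ V, DifferentiableOn ℂ (fun x => f (x, y)) U)
    (h2 : ∀ x ∈ U, DifferentiableOn ℂ (fun y => f (x, y)) V) :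
    DifferentiableOn ℂ f (U ×ˢ V) := by
  rintro ⟨x₀, y₀⟩ hp
  obtain ⟨hx₀, hy₀⟩ := hp
  have hM : 0 ≤ M := le_trans (norm_nonneg _) (hbd (x₀, y₀) ⟨hx₀, hy₀⟩)
  -- choose a radius
  obtain ⟨r₁, hr₁pos, hr₁⟩ := Metric.isOpen_iff.1 hU x₀ hx₀
  obtain ⟨r₂, hr₂pos, hr₂⟩ := Metric.isOpen_iff.1 hV y₀ hy₀
  set r : ℝ := min r₁ r₂ / 2 with hrdef
  have hr : 0 < r := by positivity
  have hbX : ball x₀ (2 * r) ⊆ U := by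
    refine subset_trans (Metric.ball_subset_ball ?_) hr₁
    rw [hrdef]; rcases le_total r₁ r₂ with h | h <;> simp [min_eq_left, min_eq_right, h] <;> linarith
  have hbY : ball y₀ (2 * r) ⊆ V := by
    refine subset_trans (Metric.ball_subset_ball ?_) hr₂
    rw [hrdef]; rcases le_total r₁ r₂ with h | h <;> simp [min_eq_left, min_eq_right, h] <;> linarith
  have hx₀b : x₀ ∈ ball x₀ (2 * r) := mem_ball_self (by linarith)
  have hy₀b : y₀ ∈ ball y₀ (2 * r) := mem_ball_self (by linarith)
  -- the doubly-vanishing part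
  set g : X × Y → Z := fun q => f q - f (q.1, y₀) - f (x₀, q.2) + f (x₀, y₀) with hgdef
  -- Step A: for y in the ball, x ↦ g (x, y) obeys a Schwarz estimate
  have stepA : ∀ y ∈ ball y₀ (2 * r), ∀ x ∈ ball x₀ (2 * r),
      ‖g (x, y)‖ ≤ 2 * (2 * M) / (2 * r) * ‖x - x₀‖ := by
    intro y hy x hx
    have hyV : y ∈ V := hbY hy
    have hd : DifferentiableOn ℂ (fun x => f (x, y) - f (x, y₀)) (ball x₀ (2 * r)) :=
      ((h1 y hyV).sub (h1 y₀ hy₀)).mono hbX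
    have hb : ∀ w ∈ ball x₀ (2 * r), ‖f (w, y) - f (w, y₀)‖ ≤ 2 * M := by
      intro w hw
      have := hbd (w, y) ⟨hbX hw, hyV⟩
      have := hbd (w, y₀) ⟨hbX hw, hy₀⟩
      calc ‖f (w, y) - f (w, y₀)‖ ≤ ‖f (w, y)‖ + ‖f (w, y₀)‖ := norm_sub_le _ _
      _ ≤ 2 * M := by linarith
    have := schwarz_of_bound (by linarith : (0:ℝ) < 2 * r) hd hb hx
    have heq : g (x, y) = (f (x, y) - f (x, y₀)) - (f (x₀, y) - f (x₀, y₀)) := by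
      simp only [hgdef]; abel
    rw [heq]
    exact this
  -- Step B: double Schwarz estimate
  have stepB : ∀ x ∈ ball x₀ (2 * r), ∀ y ∈ ball y₀ (2 * r),
      ‖g (x, y)‖ ≤ 2 * (2 * (2 * M) / (2 * r) * ‖x - x₀‖) / (2 * r) * ‖y - y₀‖ := by
    intro x hx y hy
    have hxU : x ∈ U := hbX hx
    have hd : DifferentiableOn ℂ (fun y => g (x, y)) (ball y₀ (2 * r)) := by
      have : DifferentiableOn ℂ
          (fun y => f (x, y) - f (x, y₀) - f (x₀, y) + f (x₀, y₀)) (ball y₀ (2 * r)) :=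
        ((((h2 x hxU).sub_const _).sub (h2 x₀ hx₀)).add_const _).mono hbY
      exact this
    have hb : ∀ w ∈ ball y₀ (2 * r), ‖g (x, w)‖ ≤ 2 * (2 * M) / (2 * r) * ‖x - x₀‖ :=
      fun w hw => stepA w hw x hx
    have := schwarz_of_bound (by linarith : (0:ℝ) < 2 * r) hd hb hy
    have hzero : g (x, y₀) = 0 := by simp only [hgdef]; abel
    rw [hzero, sub_zero] at this
    exact this
  -- the linear part
  have hdA : DifferentiableAt ℂ (fun x => f (x, y₀)) x₀ :=
    ((h1 y₀ hy₀) x₀ hx₀).differentiableAt (hU.mem_nhds hx₀)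
  have hdB : DifferentiableAt ℂ (fun y => f (x₀, y)) y₀ :=
    ((h2 x₀ hx₀) y₀ hy₀).differentiableAt (hV.mem_nhds hy₀)
  set A := fderiv ℂ (fun x => f (x, y₀)) x₀ with hA
  set B := fderiv ℂ (fun y => f (x₀, y)) y₀ with hB
  set D : X × Y →L[ℂ] Z := A.comp (ContinuousLinearMap.fst ℂ X Y)
    + B.comp (ContinuousLinearMap.snd ℂ X Y) with hD
  have hh : HasFDerivAt (fun q : X × Y => f (q.1, y₀) + (f (x₀, q.2) - f (x₀, y₀))) D (x₀, y₀) := by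
    have ha : HasFDerivAt (fun q : X × Y => f (q.1, y₀))
        (A.comp (ContinuousLinearMap.fst ℂ X Y)) (x₀, y₀) :=
      hdA.hasFDerivAt.comp (x := (x₀, y₀)) (f := Prod.fst) hasFDerivAt_fst
    have hb : HasFDerivAt (fun q : X × Y => f (x₀, q.2) - f (x₀, y₀))
        (B.comp (ContinuousLinearMap.snd ℂ X Y)) (x₀, y₀) :=
      (hdB.hasFDerivAt.comp (x := (x₀, y₀)) (f := Prod.snd) hasFDerivAt_snd).sub_const _
    exact ha.add hb
  -- g has derivative 0
  set K : ℝ := 2 * (2 * (2 * M) / (2 * r)) / (2 * r) with hK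
  have hKval : K = 2 * M / (r * r) := by rw [hK]; field_simp
  have hKnn : 0 ≤ K := by
    rw [hKval]; exact div_nonneg (by linarith) (by positivity)
  have hgsmall : HasFDerivAt g (0 : X × Y →L[ℂ] Z) (x₀, y₀) := by
    rw [hasFDerivAt_iff_isLittleO_nhds_zero]
    rw [Asymptotics.isLittleO_iff]
    intro c hc
    have hδ : 0 < min r (c / (K + 1)) := lt_min hr (div_pos hc (by linarith))
    filter_upwards [Metric.ball_mem_nhds (0 : X × Y) hδ] with q hq
    have hq1 : ‖q.1‖ < r := by
      have : ‖q‖ < r := lt_of_lt_of_le (by simpa [dist_eq_norm] using hq) (min_le_left _ _)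
      exact lt_of_le_of_lt (norm_fst_le q) this
    have hq2 : ‖q.2‖ < r := by
      have : ‖q‖ < r := lt_of_lt_of_le (by simpa [dist_eq_norm] using hq) (min_le_left _ _)
      exact lt_of_le_of_lt (norm_snd_le q) this
    have hqc : ‖q‖ ≤ c / (K + 1) := by
      have : ‖q‖ < min r (c / (K + 1)) := by simpa [dist_eq_norm] using hq
      exact le_of_lt (lt_of_lt_of_le this (min_le_right _ _))
    have hxb : x₀ + q.1 ∈ ball x₀ (2 * r) := by
      simp only [mem_ball, dist_eq_norm, add_sub_cancel_left]
      linarith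
    have hyb : y₀ + q.2 ∈ ball y₀ (2 * r) := by
      simp only [mem_ball, dist_eq_norm, add_sub_cancel_left]
      linarith
    have hest := stepB _ hxb _ hyb
    simp only [add_sub_cancel_left] at hest
    have hgp : g (x₀, y₀) = 0 := by simp only [hgdef]; abel
    have hq1n : ‖q.1‖ ≤ ‖q‖ := norm_fst_le q
    have hq2n : ‖q.2‖ ≤ ‖q‖ := norm_snd_le q
    have hmain : ‖g ((x₀, y₀) + q)‖ ≤ K * ‖q‖ * ‖q‖ := by
      have h0 : ((x₀, y₀) : X × Y) + q = (x₀ + q.1, y₀ + q.2) := rfl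
      rw [h0]
      calc ‖g (x₀ + q.1, y₀ + q.2)‖
          ≤ 2 * (2 * (2 * M) / (2 * r) * ‖q.1‖) / (2 * r) * ‖q.2‖ := hest
        _ = K * ‖q.1‖ * ‖q.2‖ := by rw [hK]; ring
        _ ≤ K * ‖q‖ * ‖q‖ := by
            exact mul_le_mul (mul_le_mul_of_nonneg_left hq1n hKnn) hq2n (norm_nonneg _)
              (mul_nonneg hKnn (norm_nonneg _))
    have : ‖g ((x₀, y₀) + q) - g (x₀, y₀) - (0 : X × Y →L[ℂ] Z) q‖ = ‖g ((x₀, y₀) + q)‖ := by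
      rw [hgp]; simp
    rw [this]
    calc ‖g ((x₀, y₀) + q)‖ ≤ K * ‖q‖ * ‖q‖ := hmain
      _ ≤ K * ‖q‖ * (c / (K + 1)) := by
          exact mul_le_mul_of_nonneg_left hqc (mul_nonneg hKnn (norm_nonneg _))
      _ ≤ c * ‖q‖ := by
          rw [mul_comm (K * ‖q‖) _, ← mul_assoc]
          apply mul_le_mul_of_nonneg_right _ (norm_nonneg _)
          rw [div_mul_eq_mul_div, div_le_iff₀ (by linarith : (0:ℝ) < K + 1)]
          nlinarith [norm_nonneg q]
  -- combine
  have hf : HasFDerivAt f D (x₀, y₀) := by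
    have hsum := hh.add hgsmall
    have heq : (fun q : X × Y => f (q.1, y₀) + (f (x₀, q.2) - f (x₀, y₀)) + g q) = f := by
      funext q
      simp only [hgdef]
      abel
    rw [show ((fun q : X × Y => f (q.1, y₀) + (f (x₀, q.2) - f (x₀, y₀))) + g) = f from heq, add_zero] at hsum
    exact hsum
  exact hf.differentiableAt.differentiableWithinAt
end
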